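/- (Series form of the transience criterion for birth-and-death processes.) Let (λ_n) and (μ_n) be sequences of real numbers in (0, ∞), and suppose there exist a constant c > 1, an integer K ≥ 1 and an index n_0 such that for all n > n_0, λ_n/μ_n ≥ 1 + 1/n + (1/n)·∑_{k=1}^{K-1} 1/(∏_{j=1}^{k} ln_{(j)} n) + c/(n·∏_{j=1}^{K} ln_{(j)} n). Then the series ∑_{n=1}^∞ ∏_{k=1}^{n} (μ_k/λ_k) converges (equivalently, by Karlin–McGregor's criterion, the birth-and-death process with birth rates λ_n and death rates μ_n is transient). -/

import Mathlib

open Real Filter Finset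

/-- Iterated exponential tower: `emb 0 = 1`, `emb (i+1) = exp (emb i)`. -/
noncomputable def emb : ℕ → ℝ
  | 0 => 1
  | (i+1) => Real.exp (emb i)

lemma one_le_emb (i : ℕ) : 1 ≤ emb i := by
  induction i with
  | zero => simp [emb]
  | succ i ih =>
    have := Real.add_one_le_exp (emb i)
    show 1 ≤ Real.exp (emb i)
    linarith

lemma emb_pos (i : ℕ) : 0 < emb i := lt_of_lt_of_le one_pos (one_le_emb i)

lemma emb_le_succ (i : ℕ) : emb i ≤ emb (i+1) := by
  have := Real.add_one_le_exp (emb i)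
  show emb i ≤ Real.exp (emb i)
  linarith

lemma one_le_prod_real {s : Finset ℕ} {f : ℕ → ℝ} (h : ∀ i ∈ s, 1 ≤ f i) :
    1 ≤ ∏ i ∈ s, f i := by
  calc (1:ℝ) = ∏ i ∈ s, 1 := by simp
    _ ≤ ∏ i ∈ s, f i := Finset.prod_le_prod (fun i _ => zero_le_one) h

lemma emb_mono : Monotone emb := monotone_nat_of_le_succ emb_le_succ

lemma log_emb (i : ℕ) : Real.log (emb (i+1)) = emb i := by simp [emb]

/-- Monotonicity of the iterated log on `[emb i, ∞)`. -/
lemma logIter_mono (i : ℕ) : ∀ x y : ℝ, emb i ≤ x → x ≤ y →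
    Real.log^[i] x ≤ Real.log^[i] y := by
  induction i with
  | zero => intro x y _ hxy; simpa using hxy
  | succ i ih =>
    intro x y hx hxy
    rw [Function.iterate_succ_apply, Function.iterate_succ_apply]
    have hx0 : (0:ℝ) < emb (i+1) := emb_pos _
    have h1 : emb i ≤ Real.log x := by
      rw [← log_emb i]; exact Real.log_le_log (by positivity) hx
    exact ih _ _ h1 (Real.log_le_log (lt_of_lt_of_le hx0 hx) hxy)

lemma one_le_logIter (i : ℕ) : ∀ x : ℝ, emb i ≤ x → 1 ≤ Real.log^[i] x := by
  induction i with
  | zero => intro x hx; simpa [emb] using hx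
  | succ i ih =>
    intro x hx
    rw [Function.iterate_succ_apply]
    refine ih _ ?_
    rw [← log_emb i]
    exact Real.log_le_log (emb_pos _) hx

lemma one_le_logIter' {i j : ℕ} (hij : i ≤ j) {x : ℝ} (hx : emb j ≤ x) :
    1 ≤ Real.log^[i] x := one_le_logIter i x (le_trans (emb_mono hij) hx)

lemma logIter_le_log {j : ℕ} (hj : 1 ≤ j) {x : ℝ} (hx : emb j ≤ x) :
    Real.log^[j] x ≤ Real.log x := by
  induction j with
  | zero => omega
  | succ j ih =>
    rcases Nat.eq_or_lt_of_le hj with h1 | h1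
    · simp [← h1]
    · have hj1 : 1 ≤ j := by omega
      have hx' : emb j ≤ x := le_trans (emb_le_succ j) hx
      have h2 : (0:ℝ) < Real.log^[j] x :=
        lt_of_lt_of_le one_pos (one_le_logIter j x hx')
      calc Real.log^[j+1] x = Real.log (Real.log^[j] x) := Function.iterate_succ_apply' _ _ _
        _ ≤ Real.log^[j] x := by linarith [Real.log_le_sub_one_of_pos h2]
        _ ≤ Real.log x := ih hj1 hx'

/-- The product `x · log x · log log x ⋯` (j factors). -/
noncomputable def Pprod (j : ℕ) (x : ℝ) : ℝ := ∏ i ∈ Finset.range j, Real.log^[i] x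

lemma one_le_Pprod {j : ℕ} {x : ℝ} (hx : emb j ≤ x) : 1 ≤ Pprod j x := by
  refine one_le_prod_real ?_
  intro i hi
  exact one_le_logIter' (le_of_lt (Finset.mem_range.mp hi)) hx

lemma Pprod_pos {j : ℕ} {x : ℝ} (hx : emb j ≤ x) : 0 < Pprod j x :=
  lt_of_lt_of_le one_pos (one_le_Pprod hx)

lemma Pprod_mono {j : ℕ} {x y : ℝ} (hx : emb j ≤ x) (hxy : x ≤ y) :
    Pprod j x ≤ Pprod j y := by
  refine Finset.prod_le_prod ?_ ?_
  · intro i hi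
    exact le_trans zero_le_one (one_le_logIter' (le_of_lt (Finset.mem_range.mp hi)) hx)
  · intro i hi
    exact logIter_mono i x y (le_trans (emb_mono (le_of_lt (Finset.mem_range.mp hi))) hx) hxy

lemma le_Pprod_succ {j : ℕ} {x : ℝ} (hx : emb (j+1) ≤ x) : x ≤ Pprod (j+1) x := by
  rw [Pprod, Finset.prod_range_succ']
  simp only [Function.iterate_zero_apply]
  nth_rewrite 1 [← one_mul x]
  refine mul_le_mul_of_nonneg_right ?_ (le_trans (emb_pos _).le hx)
  refine one_le_prod_real ?_
  intro i hi
  exact one_le_logIter' (by have := Finset.mem_range.mp hi; omega) hx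

/-- Derivative of the iterated log. -/
lemma hasDerivAt_logIter (j : ℕ) (x : ℝ) (hx : ∀ i < j, 0 < Real.log^[i] x) :
    HasDerivAt (Real.log^[j]) (Pprod j x)⁻¹ x := by
  induction j with
  | zero => simpa [Pprod] using hasDerivAt_id x
  | succ j ih =>
    have hj : HasDerivAt (Real.log^[j]) (Pprod j x)⁻¹ x :=
      ih (fun i hi => hx i (by omega))
    have hlog : HasDerivAt Real.log (Real.log^[j] x)⁻¹ (Real.log^[j] x) :=
      Real.hasDerivAt_log (ne_of_gt (hx j (by omega)))
    have := hlog.comp x hj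
    have heq : (Real.log^[j] x)⁻¹ * (Pprod j x)⁻¹ = (Pprod (j+1) x)⁻¹ := by
      rw [Pprod, Pprod, Finset.prod_range_succ, mul_inv, mul_comm]
    rw [heq] at this
    rw [Function.iterate_succ']; exact this
/-- The log of the comparison function. -/
noncomputable def phi (K : ℕ) (c' : ℝ) (x : ℝ) : ℝ :=
  ∑ j ∈ Finset.range K, Real.log^[j+1] x + c' * Real.log^[K+1] x

/-- The derivative of `phi`. -/
noncomputable def phid (K : ℕ) (c' : ℝ) (x : ℝ) : ℝ :=
  ∑ j ∈ Finset.range K, (Pprod (j+1) x)⁻¹ + c' * (Pprod (K+1) x)⁻¹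

lemma hasDerivAt_phi (K : ℕ) (c' : ℝ) {x : ℝ} (hx : emb (K+1) ≤ x) :
    HasDerivAt (phi K c') (phid K c' x) x := by
  have key : ∀ j, j ≤ K + 1 → HasDerivAt (Real.log^[j]) (Pprod j x)⁻¹ x := by
    intro j hj
    refine hasDerivAt_logIter j x ?_
    intro i hi
    exact lt_of_lt_of_le one_pos (one_le_logIter' (by omega) hx)
  refine HasDerivAt.add ?_ (HasDerivAt.const_mul c' (key (K+1) le_rfl))
  exact HasDerivAt.fun_sum (fun j hj => key (j+1) (by have := Finset.mem_range.mp hj; omega))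

lemma phid_nonneg (K : ℕ) {c' : ℝ} (hc' : 0 ≤ c') {x : ℝ} (hx : emb (K+1) ≤ x) :
    0 ≤ phid K c' x := by
  have h1 : ∀ j, j ≤ K → 0 < Pprod (j+1) x :=
    fun j hj => Pprod_pos (le_trans (emb_mono (by omega)) hx)
  refine add_nonneg (Finset.sum_nonneg fun j hj => ?_) ?_
  · exact (inv_nonneg).mpr (h1 j (by have := Finset.mem_range.mp hj; omega)).le
  · exact mul_nonneg hc' ((inv_nonneg).mpr (h1 K le_rfl).le)

lemma phid_antitone (K : ℕ) {c' : ℝ} (hc' : 0 ≤ c') {x y : ℝ}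
    (hx : emb (K+1) ≤ x) (hxy : x ≤ y) : phid K c' y ≤ phid K c' x := by
  have key : ∀ j, j ≤ K → (Pprod (j+1) y)⁻¹ ≤ (Pprod (j+1) x)⁻¹ := by
    intro j hj
    have hx' : emb (j+1) ≤ x := le_trans (emb_mono (by omega)) hx
    exact inv_anti₀ (Pprod_pos hx') (Pprod_mono hx' hxy)
  refine add_le_add (Finset.sum_le_sum fun j hj =>
    key j (by have := Finset.mem_range.mp hj; omega)) ?_
  exact mul_le_mul_of_nonneg_left (key K le_rfl) hc'

lemma phi_mono (K : ℕ) {c' : ℝ} (hc' : 0 ≤ c') {x y : ℝ}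
    (hx : emb (K+1) ≤ x) (hxy : x ≤ y) : phi K c' x ≤ phi K c' y := by
  have key : ∀ j, j ≤ K → Real.log^[j+1] x ≤ Real.log^[j+1] y := by
    intro j hj
    exact logIter_mono (j+1) x y (le_trans (emb_mono (by omega)) hx) hxy
  refine add_le_add (Finset.sum_le_sum fun j hj =>
    key j (by have := Finset.mem_range.mp hj; omega)) ?_
  exact mul_le_mul_of_nonneg_left (key K le_rfl) hc'

lemma phid_le (K : ℕ) {c' : ℝ} (hc' : 0 ≤ c') {x : ℝ} (hx : emb (K+1) ≤ x) :
    phid K c' x ≤ (K + c') * x⁻¹ := by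
  have hx0 : (0:ℝ) < x := lt_of_lt_of_le (emb_pos _) hx
  have key : ∀ j, j ≤ K → (Pprod (j+1) x)⁻¹ ≤ x⁻¹ := by
    intro j hj
    have hx' : emb (j+1) ≤ x := le_trans (emb_mono (by omega)) hx
    exact inv_anti₀ hx0 (le_Pprod_succ hx')
  have h1 : ∑ j ∈ Finset.range K, (Pprod (j+1) x)⁻¹ ≤ (K:ℝ) * x⁻¹ := by
    calc ∑ j ∈ Finset.range K, (Pprod (j+1) x)⁻¹
        ≤ ∑ _j ∈ Finset.range K, x⁻¹ := Finset.sum_le_sum fun j hj =>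
            key j (by have := Finset.mem_range.mp hj; omega)
      _ = (K:ℝ) * x⁻¹ := by simp [mul_comm]
  have h2 : c' * (Pprod (K+1) x)⁻¹ ≤ c' * x⁻¹ :=
    mul_le_mul_of_nonneg_left (key K le_rfl) hc'
  calc phid K c' x ≤ (K:ℝ) * x⁻¹ + c' * x⁻¹ := add_le_add h1 h2
    _ = (K + c') * x⁻¹ := by ring

lemma exp_neg_phi (K : ℕ) (c' : ℝ) {x : ℝ} (hx : emb (K+1) ≤ x) :
    Real.exp (-(phi K c' x)) = (Pprod K x)⁻¹ * (Real.log^[K] x) ^ (-c') := by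
  have hpos : ∀ i, i ≤ K + 1 → 0 < Real.log^[i] x :=
    fun i hi => lt_of_lt_of_le one_pos (one_le_logIter' hi hx)
  rw [phi, neg_add, Real.exp_add]
  congr 1
  · rw [← Finset.sum_neg_distrib, Real.exp_sum]
    rw [Pprod, ← Finset.prod_inv_distrib]
    refine Finset.prod_congr rfl ?_
    intro j hj
    have hj' : j < K := Finset.mem_range.mp hj
    rw [Function.iterate_succ_apply', Real.exp_neg, Real.exp_log (hpos j (by omega))]
  · rw [Real.rpow_def_of_pos (hpos K (by omega)), Function.iterate_succ_apply']
    ring_nf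

lemma hasDerivAt_psi (K : ℕ) (c' : ℝ) {x : ℝ} (hx : emb (K+1) ≤ x) :
    HasDerivAt (fun y => (Real.log^[K] y) ^ (1 - c'))
      (-((c' - 1) * Real.exp (-(phi K c' x)))) x := by
  have hpos : (0:ℝ) < Real.log^[K] x :=
    lt_of_lt_of_le one_pos (one_le_logIter' (by omega) hx)
  have hd : HasDerivAt (Real.log^[K]) (Pprod K x)⁻¹ x := by
    refine hasDerivAt_logIter K x fun i hi =>
      lt_of_lt_of_le one_pos (one_le_logIter' (by omega) hx)
  have := hd.rpow_const (p := 1 - c') (Or.inl (ne_of_gt hpos))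
  convert this using 1
  rw [exp_neg_phi K c' hx]
  have he : (1 : ℝ) - c' - 1 = -c' := by ring
  rw [he]
  ring

lemma exp_le_quad {t : ℝ} (h0 : 0 ≤ t) (h1 : t ≤ 1/2) :
    Real.exp t ≤ 1 + t + 2 * t ^ 2 := by
  have h2 : 1 - t ≤ Real.exp (-t) := by linarith [Real.add_one_le_exp (-t)]
  have h3 : (0:ℝ) < 1 - t := by linarith
  have h5 : Real.exp t * (1 - t) ≤ 1 := by
    calc Real.exp t * (1 - t) ≤ Real.exp t * Real.exp (-t) :=
          mul_le_mul_of_nonneg_left h2 (Real.exp_nonneg t)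
      _ = 1 := by rw [← Real.exp_add]; simp
  nlinarith [h5, h3, sq_nonneg t, Real.exp_pos t]
lemma phid_c_split (K : ℕ) (c c' x : ℝ) :
    phid K c x = phid K c' x + (c - c') * (Pprod (K+1) x)⁻¹ := by
  unfold phid; ring

lemma phi_continuousOn (K : ℕ) (c' : ℝ) {a b : ℝ} (ha : emb (K+1) ≤ a) :
    ContinuousOn (phi K c') (Set.Icc a b) := by
  intro x hx
  exact (hasDerivAt_phi K c' (le_trans ha hx.1)).continuousAt.continuousWithinAt

/-- Mean value bound: `phi (x+1) - phi x ≤ phid x`. -/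
lemma phi_diff_le (K : ℕ) {c' x : ℝ} (hc' : 0 ≤ c') (h1 : emb (K+1) ≤ x) :
    phi K c' (x+1) - phi K c' x ≤ phid K c' x := by
  obtain ⟨ξ, hξ, hξeq⟩ := exists_hasDerivAt_eq_slope (phi K c') (phid K c')
    (show x < x + 1 by linarith) (phi_continuousOn K c' h1)
    (fun y hy => hasDerivAt_phi K c' (le_trans h1 hy.1.le))
  have : phi K c' (x+1) - phi K c' x = phid K c' ξ := by
    rw [hξeq]; field_simp; ring
  rw [this]
  exact phid_antitone K hc' h1 hξ.1.le

lemma ratio_bound (K : ℕ) {c c' x : ℝ} (hc' : 0 ≤ c') (hcc : c' ≤ c)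
    (h1 : emb (K+1) ≤ x)
    (h3 : phid K c' x ≤ 1/2)
    (h4 : 2 * (phid K c' x)^2 ≤ (c - c') * (Pprod (K+1) x)⁻¹) :
    Real.exp (phi K c' (x+1) - phi K c' x) ≤ 1 + phid K c x := by
  have h0 : 0 ≤ phid K c' x := phid_nonneg K hc' h1
  calc Real.exp (phi K c' (x+1) - phi K c' x)
      ≤ Real.exp (phid K c' x) := Real.exp_le_exp.mpr (phi_diff_le K hc' h1)
    _ ≤ 1 + phid K c' x + 2 * (phid K c' x)^2 := exp_le_quad h0 h3
    _ ≤ 1 + phid K c' x + (c - c') * (Pprod (K+1) x)⁻¹ := by linarith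
    _ = 1 + phid K c x := by rw [phid_c_split K c c' x]; ring

lemma Pprod_succ_eq (j : ℕ) (x : ℝ) :
    Pprod (j+1) x = x * ∏ i ∈ Finset.Icc 1 j, Real.log^[i] x := by
  rw [Pprod, Finset.prod_range_succ']
  have : ∏ i ∈ Finset.Icc 1 j, Real.log^[i] x
      = ∏ i ∈ Finset.range j, Real.log^[i+1] x := by
    rw [← Finset.Ico_add_one_right_eq_Icc, Finset.prod_Ico_eq_prod_range]
    simp [Nat.add_comm]
  rw [this]
  simp [mul_comm, Function.iterate_zero_apply]

lemma one_add_phid_eq (K' : ℕ) (a : ℝ) (x : ℝ) :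
    1 + phid (K'+1) a x =
      1 + 1 / x
        + (1 / x) * ∑ k ∈ Finset.Icc 1 K', 1 / ∏ j ∈ Finset.Icc 1 k, Real.log^[j] x
        + a / (x * ∏ j ∈ Finset.Icc 1 (K'+1), Real.log^[j] x) := by
  unfold phid
  rw [Finset.sum_range_succ']
  have h0 : (Pprod (0+1) x)⁻¹ = 1 / x := by
    simp [Pprod]
  have hsum : ∑ j ∈ Finset.range K', (Pprod (j+1+1) x)⁻¹
      = (1 / x) * ∑ k ∈ Finset.Icc 1 K', 1 / ∏ j ∈ Finset.Icc 1 k, Real.log^[j] x := by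
    rw [← Finset.Ico_add_one_right_eq_Icc, Finset.sum_Ico_eq_sum_range, Finset.mul_sum]
    refine Finset.sum_congr rfl ?_
    intro j hj
    rw [show 1 + j = j + 1 from Nat.add_comm 1 j, Pprod_succ_eq (j+1) x, mul_inv,
      one_div, one_div]
  have hlast : a * (Pprod (K'+1+1) x)⁻¹
      = a / (x * ∏ j ∈ Finset.Icc 1 (K'+1), Real.log^[j] x) := by
    rw [Pprod_succ_eq (K'+1) x, div_eq_mul_inv]
  rw [h0, hsum, hlast]
  ring
lemma psi_step (K : ℕ) {c' x : ℝ} (hc' : 1 ≤ c') (h1 : emb (K+1) ≤ x) :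
    (c' - 1) * Real.exp (-(phi K c' (x+1)))
      ≤ (Real.log^[K] x) ^ (1 - c') - (Real.log^[K] (x+1)) ^ (1 - c') := by
  obtain ⟨ξ, hξ, hξeq⟩ := exists_hasDerivAt_eq_slope
    (fun y => (Real.log^[K] y) ^ (1 - c'))
    (fun y => -((c' - 1) * Real.exp (-(phi K c' y))))
    (show x < x + 1 by linarith)
    (fun y hy => (hasDerivAt_psi K c' (le_trans h1 hy.1)).continuousAt.continuousWithinAt)
    (fun y hy => hasDerivAt_psi K c' (le_trans h1 hy.1.le))
  have heq : (Real.log^[K] x) ^ (1 - c') - (Real.log^[K] (x+1)) ^ (1 - c')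
      = (c' - 1) * Real.exp (-(phi K c' ξ)) := by
    have h2 : x + 1 - x = 1 := by ring
    rw [h2, div_one] at hξeq
    linarith [hξeq]
  rw [heq]
  refine mul_le_mul_of_nonneg_left ?_ (by linarith)
  refine Real.exp_le_exp.mpr (neg_le_neg ?_)
  exact phi_mono K (by linarith) (le_trans h1 hξ.1.le) hξ.2.le

lemma Pprod_succ_le {K : ℕ} {x : ℝ} (hx : emb (K+1) ≤ x) :
    Pprod (K+1) x ≤ x * Real.log x ^ K := by
  have hx0 : (0:ℝ) < x := lt_of_lt_of_le (emb_pos _) hx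
  rw [Pprod_succ_eq]
  refine mul_le_mul_of_nonneg_left ?_ hx0.le
  calc ∏ i ∈ Finset.Icc 1 K, Real.log^[i] x
      ≤ ∏ _i ∈ Finset.Icc 1 K, Real.log x := by
        refine Finset.prod_le_prod ?_ ?_
        · intro i hi
          have hi' := Finset.mem_Icc.mp hi
          exact le_trans zero_le_one (one_le_logIter' (by omega) hx)
        · intro i hi
          have hi' := Finset.mem_Icc.mp hi
          exact logIter_le_log hi'.1 (le_trans (emb_mono (by omega)) hx)
    _ = Real.log x ^ K := by
        rw [Finset.prod_const, Nat.card_Icc]; norm_num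
/-- **Series form of the transience criterion for birth-and-death processes.**
Here `Real.log^[k]` is the `k`-th iterate of `Real.log`. -/
theorem birth_death_transient
    (lam mu : ℕ → ℝ) (hlam : ∀ n, 0 < lam n) (hmu : ∀ n, 0 < mu n)
    (c : ℝ) (hc : 1 < c) (K : ℕ) (hK : 1 ≤ K) (n₀ : ℕ)
    (h : ∀ n > n₀,
      lam n / mu n ≥
        1 + 1 / (n : ℝ)
          + (1 / (n : ℝ)) * ∑ k ∈ Finset.Icc 1 (K - 1),
              1 / ∏ j ∈ Finset.Icc 1 k, Real.log^[j] (n : ℝ)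
          + c / ((n : ℝ) * ∏ j ∈ Finset.Icc 1 K, Real.log^[j] (n : ℝ))) :
    Summable (fun n : ℕ => ∏ k ∈ Finset.Icc 1 n, mu k / lam k) := by
  obtain ⟨K', rfl⟩ : ∃ K', K = K' + 1 := ⟨K - 1, by omega⟩
  simp only [Nat.add_sub_cancel] at h
  set c' : ℝ := (1 + c) / 2 with hc'def
  have hc'1 : 1 < c' := by rw [hc'def]; linarith
  have hc'c : c' < c := by rw [hc'def]; linarith
  have hc'0 : (0:ℝ) ≤ c' := by linarith
  set A : ℝ := ((K' + 1 : ℕ) : ℝ) + c' with hAdef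
  have hA0 : 0 < A := by
    have : (0:ℝ) ≤ ((K' + 1 : ℕ) : ℝ) := Nat.cast_nonneg _
    rw [hAdef]; linarith
  have hcc0 : (0:ℝ) < c - c' := by linarith
  have hε : 0 < (c - c') / (2 * A ^ 2) := by positivity
  have hD : ∀ᶠ n : ℕ in Filter.atTop,
      Real.log (n:ℝ) ^ (K'+1) / (1 * (n:ℝ) + 0) < (c - c') / (2 * A ^ 2) :=
    ((Real.tendsto_pow_log_div_mul_add_atTop 1 0 (K'+1) one_ne_zero).comp
      tendsto_natCast_atTop_atTop).eventually (gt_mem_nhds hε)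
  have hA' : ∀ᶠ n : ℕ in Filter.atTop, emb (K' + 2) ≤ (n:ℝ) :=
    tendsto_natCast_atTop_atTop.eventually_ge_atTop _
  have hB : ∀ᶠ n : ℕ in Filter.atTop, 2 * A ≤ (n:ℝ) :=
    tendsto_natCast_atTop_atTop.eventually_ge_atTop _
  have hC : ∀ᶠ n : ℕ in Filter.atTop, n₀ < n := Filter.eventually_gt_atTop n₀
  obtain ⟨N, hN⟩ := Filter.eventually_atTop.mp ((hA'.and hB).and (hC.and hD))
  -- package the conditions
  have cond : ∀ n : ℕ, N ≤ n → emb (K' + 1 + 1) ≤ (n:ℝ) ∧ n₀ < n ∧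
      phid (K'+1) c' (n:ℝ) ≤ 1/2 ∧
      2 * (phid (K'+1) c' (n:ℝ))^2 ≤ (c - c') * (Pprod (K'+1+1) (n:ℝ))⁻¹ := by
    intro n hn
    obtain ⟨⟨h1, h2⟩, h3, h4⟩ := hN n hn
    have hemb : emb (K'+1+1) ≤ (n:ℝ) := h1
    have hn0 : (0:ℝ) < (n:ℝ) := lt_of_lt_of_le (emb_pos _) h1
    have hphid : phid (K'+1) c' (n:ℝ) ≤ A * (n:ℝ)⁻¹ := phid_le (K'+1) hc'0 hemb
    refine ⟨h1, h3, ?_, ?_⟩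
    · refine le_trans hphid ?_
      rw [mul_inv_le_iff₀ hn0]
      linarith
    · have hphp : 0 ≤ phid (K'+1) c' (n:ℝ) := phid_nonneg _ hc'0 hemb
      have hsq : (phid (K'+1) c' (n:ℝ))^2 ≤ (A * (n:ℝ)⁻¹)^2 :=
        pow_le_pow_left₀ hphp hphid 2
      have hPle : Pprod (K'+1+1) (n:ℝ) ≤ (n:ℝ) * Real.log (n:ℝ) ^ (K'+1) :=
        Pprod_succ_le hemb
      have hPpos : 0 < Pprod (K'+1+1) (n:ℝ) := Pprod_pos hemb
      have hlog1 : (1:ℝ) ≤ Real.log (n:ℝ) := by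
        have := one_le_logIter' (i := 1) (j := K'+2) (by omega) hemb
        simpa using this
      have hL1 : (1:ℝ) ≤ Real.log (n:ℝ) ^ (K'+1) := one_le_pow₀ hlog1
      have hinv : ((n:ℝ) * Real.log (n:ℝ) ^ (K'+1))⁻¹ ≤ (Pprod (K'+1+1) (n:ℝ))⁻¹ :=
        inv_anti₀ hPpos hPle
      rw [one_mul, add_zero, div_lt_iff₀ hn0] at h4
      have h4' : Real.log (n:ℝ)^(K'+1) * (2*A^2) < (c - c') * (n:ℝ) := by
        have hpos2 : (0:ℝ) < 2*A^2 := by positivity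
        calc Real.log (n:ℝ)^(K'+1) * (2*A^2)
            < ((c-c')/(2*A^2) * (n:ℝ)) * (2*A^2) := mul_lt_mul_of_pos_right h4 hpos2
          _ = (c - c') * (n:ℝ) := by field_simp
      have hL0 : (0:ℝ) < Real.log (n:ℝ)^(K'+1) := by linarith
      calc 2 * (phid (K'+1) c' (n:ℝ))^2 ≤ 2 * (A * (n:ℝ)⁻¹)^2 := by linarith
        _ ≤ (c - c') * ((n:ℝ) * Real.log (n:ℝ)^(K'+1))⁻¹ := by
            rw [mul_inv]
            have hmaj := mul_lt_mul_of_pos_right h4' hn0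
            have hne : (n:ℝ) ≠ 0 := hn0.ne'
            have hLne : Real.log (n:ℝ)^(K'+1) ≠ 0 := hL0.ne'
            rw [mul_pow, inv_pow]
            rw [show (2:ℝ)*(A^2*(((n:ℝ))^2)⁻¹) = 2*A^2/(n:ℝ)^2 by ring,
              show (c-c')*(((n:ℝ))⁻¹*(Real.log (n:ℝ)^(K'+1))⁻¹)
                = (c-c')/((n:ℝ)*Real.log (n:ℝ)^(K'+1)) by ring]
            rw [div_le_div_iff₀ (by positivity) (by positivity)]
            nlinarith [hmaj]
        _ ≤ (c - c') * (Pprod (K'+1+1) (n:ℝ))⁻¹ :=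
            mul_le_mul_of_nonneg_left hinv (by linarith)
  -- the comparison sequence
  set b : ℕ → ℝ := fun n => Real.exp (-(phi (K'+1) c' ((n:ℝ)+1))) with hbdef
  have hbpos : ∀ n, 0 < b n := fun n => Real.exp_pos _
  -- ratio step
  have key : ∀ n : ℕ, N ≤ n → mu (n+1) / lam (n+1) ≤ b (n+1) / b n := by
    intro n hn
    obtain ⟨h1, h2, h3, h4⟩ := cond (n+1) (by omega)
    set x : ℝ := ((n+1 : ℕ) : ℝ) with hxdef
    have hrb := ratio_bound (K'+1) hc'0 hc'c.le h1 h3 h4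
    have hlm : Real.exp (phi (K'+1) c' (x+1) - phi (K'+1) c' x) ≤ lam (n+1) / mu (n+1) := by
      refine le_trans hrb ?_
      rw [one_add_phid_eq K' c x]
      exact h (n+1) h2
    have hrpos : 0 < Real.exp (phi (K'+1) c' (x+1) - phi (K'+1) c' x) := Real.exp_pos _
    have hinv := inv_anti₀ hrpos hlm
    rw [inv_div] at hinv
    refine le_trans hinv (le_of_eq ?_)
    rw [← Real.exp_neg]
    simp only [hbdef]
    rw [eq_div_iff (Real.exp_pos _).ne', ← Real.exp_add]
    congr 1
    rw [hxdef]
    push_cast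
    ring
  -- domination
  set Cst : ℝ := (∏ k ∈ Finset.Icc 1 N, mu k / lam k) / b N with hCdef
  have dom : ∀ n : ℕ, N ≤ n → (∏ k ∈ Finset.Icc 1 n, mu k / lam k) ≤ Cst * b n := by
    intro n hn
    induction n, hn using Nat.le_induction with
    | base =>
        rw [hCdef, div_mul_cancel₀ _ (hbpos N).ne']
    | succ n hn ih =>
        rw [Finset.prod_Icc_succ_top (by omega : 1 ≤ n+1)]
        have hq0 : 0 ≤ mu (n+1) / lam (n+1) := le_of_lt (div_pos (hmu _) (hlam _))
        have hCb : 0 ≤ Cst * b n :=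
          le_trans (Finset.prod_nonneg fun k _ => le_of_lt (div_pos (hmu k) (hlam k))) ih
        calc (∏ k ∈ Finset.Icc 1 n, mu k / lam k) * (mu (n+1)/lam (n+1))
            ≤ (Cst * b n) * (b (n+1) / b n) := mul_le_mul ih (key n hn) hq0 hCb
          _ = Cst * b (n+1) := by
              rw [mul_assoc, mul_div_assoc', mul_div_cancel_left₀ _ (hbpos n).ne']
  -- summability of the comparison sequence
  have hcp : (0:ℝ) < c' - 1 := by linarith
  set g : ℕ → ℝ := fun i => (Real.log^[K'+1] ((i:ℝ)+1)) ^ (1 - c') with hgdef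
  have hstep : ∀ n : ℕ, N ≤ n → (c' - 1) * b (n+1) ≤ g n - g (n+1) := by
    intro n hn
    obtain ⟨h1, -, -, -⟩ := cond n hn
    have hx : emb (K'+1+1) ≤ (n:ℝ)+1 := le_trans h1 (by linarith)
    have hps := psi_step (K'+1) hc'1.le hx
    have e1 : ((n:ℝ)+1)+1 = ((n+1:ℕ):ℝ)+1 := by push_cast; ring
    rw [e1] at hps
    simpa [hbdef, hgdef, e1] using hps
  have hgnonneg : ∀ i : ℕ, N ≤ i → 0 ≤ g i := by
    intro i hi
    obtain ⟨h1, -, -, -⟩ := cond i hi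
    have hp : 0 < Real.log^[K'+1] ((i:ℝ)+1) :=
      lt_of_lt_of_le one_pos (one_le_logIter' (i := K'+1) (j := K'+1+1) (by omega) (le_trans h1 (by linarith)))
    exact (Real.rpow_pos_of_pos hp _).le
  have hsumf : Summable (fun i : ℕ => b (i + (N+1))) := by
    refine summable_of_sum_range_le (c := g N / (c'-1)) (fun i => (hbpos _).le) ?_
    intro M
    have hbound : ∀ i ∈ Finset.range M, b (i + (N+1)) ≤ (g (N+i) - g (N+(i+1)))/(c'-1) := by
      intro i hi
      have hst := hstep (N+i) (by omega)
      rw [le_div_iff₀ hcp]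
      have e : i + (N+1) = (N+i)+1 := by omega
      have e2 : N + (i+1) = (N+i)+1 := by omega
      rw [e, e2]
      linarith
    calc ∑ i ∈ Finset.range M, b (i+(N+1))
        ≤ ∑ i ∈ Finset.range M, (g (N+i) - g (N+(i+1)))/(c'-1) := Finset.sum_le_sum hbound
      _ = (∑ i ∈ Finset.range M, (g (N+i) - g (N+(i+1)))) / (c'-1) := by
          rw [Finset.sum_div]
      _ = (g (N+0) - g (N+M))/(c'-1) := by
          rw [Finset.sum_range_sub' (fun i => g (N+i)) M]
      _ ≤ g N / (c'-1) := by
          have hg0 := hgnonneg (N+M) (by omega)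
          have : g (N+0) - g (N+M) ≤ g N := by simp only [Nat.add_zero]; linarith
          exact (div_le_div_iff_of_pos_right hcp).mpr this
  have hsumb : Summable b := (summable_nat_add_iff (N+1)).mp hsumf
  have hsum2 : Summable (fun i : ℕ => Cst * b (i + N)) :=
    ((summable_nat_add_iff N).mpr hsumb).mul_left Cst
  have hsuma : Summable (fun i : ℕ => ∏ k ∈ Finset.Icc 1 (i+N), mu k / lam k) := by
    refine hsum2.of_nonneg_of_le ?_ ?_
    · intro i
      exact Finset.prod_nonneg fun k _ => (div_pos (hmu k) (hlam k)).le
    · intro i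
      exact dom (i+N) (by omega)
  exact (summable_nat_add_iff N).mp hsuma
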